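/- An even-order symmetric tensor A of order m and dimension n is positive semi-definite if and only if all of its H-eigenvalues are nonnegative, where λ is an H-eigenvalue if A x^{m-1} = λ x^{[m-1]} for some nonzero x ∈ R^n. -/

import Mathlib

/-- Prepend an index `i` to a tuple of `m - 1` indices, giving a tuple of `m` indices. -/
def consIdx {n m : ℕ} (i : Fin n) (idx : Fin (m - 1) → Fin n) : Fin m → Fin n :=
  fun k => if h : (k : ℕ) = 0 then i else idx ⟨(k : ℕ) - 1, by have := k.isLt; omega⟩


open Finset

namespace PSDAux

variable {n p : ℕ}

noncomputable def tf (A : (Fin (p+1) → Fin n) → ℝ) (x : Fin n → ℝ) : ℝ :=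
  ∑ idx : Fin (p+1) → Fin n, A idx * ∏ k, x (idx k)

noncomputable def tb (A : (Fin (p+1) → Fin n) → ℝ) (x : Fin n → ℝ) (i : Fin n) : ℝ :=
  ∑ idx : Fin p → Fin n, A (Fin.cons i idx) * ∏ k, x (idx k)

lemma sum_cons (F : (Fin (p+1) → Fin n) → ℝ) :
    ∑ idx : Fin (p+1) → Fin n, F idx = ∑ i : Fin n, ∑ t : Fin p → Fin n, F (Fin.cons i t) := by
  rw [(Fintype.sum_equiv (Fin.consEquiv fun _ => Fin n) (fun q => F (Fin.cons q.1 q.2)) F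
    (fun q => rfl)).symm, Fintype.sum_prod_type]

lemma prod_erase_zero (f : Fin (p+1) → ℝ) :
    ∏ j ∈ univ.erase 0, f j = ∏ j : Fin p, f j.succ := by
  rw [show (univ.erase (0 : Fin (p+1))) = univ.map ⟨Fin.succ, Fin.succ_injective p⟩ by
    ext j; simp only [Finset.mem_erase, Finset.mem_univ, and_true, Finset.mem_map,
      Function.Embedding.coeFn_mk, exists_true_left]
    rw [← Fin.exists_succ_eq]
    simp [eq_comm]]
  rw [Finset.prod_map]
  rfl

lemma prod_erase_perm (σ : Equiv.Perm (Fin (p+1))) (k : Fin (p+1)) (f : Fin (p+1) → ℝ) :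
    ∏ j ∈ univ.erase k, f (σ j) = ∏ j ∈ univ.erase (σ k), f j := by
  refine Finset.prod_nbij (fun j => σ j) ?_ ?_ ?_ ?_
  · intro j hj; simp_all [σ.injective.eq_iff]
  · intro a _ b _ h; exact σ.injective h
  · intro j hj
    simp only [Set.mem_image, Finset.coe_erase, Set.mem_diff] at *
    refine ⟨σ.symm j, ?_, by simp⟩
    simp only [Finset.coe_erase, Set.mem_diff, Set.mem_singleton_iff] at hj ⊢
    refine ⟨by simp, fun h => hj.2 ?_⟩
    rw [← h]; simp
  · intro j hj; rfl


lemma tf_eq_sum_tb (A : (Fin (p+1) → Fin n) → ℝ) (x : Fin n → ℝ) :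
    tf A x = ∑ i, x i * tb A x i := by
  rw [tf, sum_cons (fun idx => A idx * ∏ k, x (idx k))]
  refine Finset.sum_congr rfl fun i _ => ?_
  rw [tb, Finset.mul_sum]
  refine Finset.sum_congr rfl fun t _ => ?_
  rw [Fin.prod_univ_succ]
  simp only [Fin.cons_zero, Fin.cons_succ]
  ring

lemma tf_smul (A : (Fin (p+1) → Fin n) → ℝ) (c : ℝ) (x : Fin n → ℝ) :
    tf A (c • x) = c ^ (p+1) * tf A x := by
  rw [tf, tf, Finset.mul_sum]
  refine Finset.sum_congr rfl fun idx _ => ?_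
  simp only [Pi.smul_apply, smul_eq_mul, Finset.prod_mul_distrib, Finset.prod_const,
    Finset.card_univ, Fintype.card_fin]
  ring

lemma tf_continuous (A : (Fin (p+1) → Fin n) → ℝ) : Continuous (tf A) := by
  refine continuous_finset_sum _ fun idx _ => ?_
  exact continuous_const.mul (continuous_finset_prod _ fun k _ => continuous_apply _)

lemma tf_hasStrictFDerivAt (A : (Fin (p+1) → Fin n) → ℝ)
    (hsym : ∀ (σ : Equiv.Perm (Fin (p+1))) (idx : Fin (p+1) → Fin n), A (idx ∘ σ) = A idx)
    (x : Fin n → ℝ) :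
    HasStrictFDerivAt (tf A)
      (((p : ℝ)+1) • ∑ i, tb A x i • (ContinuousLinearMap.proj i : (Fin n → ℝ) →L[ℝ] ℝ)) x := by
  have h1 : HasStrictFDerivAt (tf A)
      (∑ idx : Fin (p+1) → Fin n, A idx •
        (∑ k, (∏ j ∈ univ.erase k, x (idx j)) •
          (ContinuousLinearMap.proj (idx k) : (Fin n → ℝ) →L[ℝ] ℝ))) x := by
    refine HasStrictFDerivAt.fun_sum fun idx _ => ?_
    exact (HasStrictFDerivAt.finset_prod fun k _ =>
      hasStrictFDerivAt_apply (idx k) x).const_mul (A idx)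
  convert h1 using 1
  ext v
  simp only [ContinuousLinearMap.coe_smul', Pi.smul_apply, ContinuousLinearMap.coe_sum',
    Finset.sum_apply, ContinuousLinearMap.coe_smul, smul_eq_mul, ContinuousLinearMap.proj_apply]
  -- RHS: ∑ idx, A idx * ∑ k, (∏ j ∈ erase k, x (idx j)) * v (idx k)
  have key : ∀ k : Fin (p+1),
      (∑ idx : Fin (p+1) → Fin n, A idx * ((∏ j ∈ univ.erase k, x (idx j)) * v (idx k)))
        = ∑ idx : Fin (p+1) → Fin n, A idx * ((∏ j ∈ univ.erase 0, x (idx j)) * v (idx 0)) := by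
    intro k
    set σ : Equiv.Perm (Fin (p+1)) := Equiv.swap 0 k with hσ
    have e : (Fin (p+1) → Fin n) ≃ (Fin (p+1) → Fin n) :=
      Equiv.arrowCongr σ.symm (Equiv.refl _)
    refine Fintype.sum_equiv (Equiv.arrowCongr σ.symm (Equiv.refl (Fin n))) _ _ fun idx => ?_
    have hco : (Equiv.arrowCongr σ.symm (Equiv.refl (Fin n))) idx = idx ∘ σ := by
      funext j; simp [Equiv.arrowCongr]
    rw [hco, hsym σ]
    have h2 : (idx ∘ σ) 0 = idx k := by simp [hσ, Function.comp]
    have h3 : ∏ j ∈ univ.erase (0:Fin (p+1)), x ((idx ∘ σ) j)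
        = ∏ j ∈ univ.erase k, x (idx j) := by
      have := prod_erase_perm σ 0 (fun j => x (idx j))
      simp only [Function.comp]
      rw [this, hσ, Equiv.swap_apply_left]
    rw [h2, h3]
  calc ((p:ℝ)+1) * ∑ i, tb A x i * v i
      = ∑ k : Fin (p+1), ∑ i, tb A x i * v i := by
        rw [Finset.sum_const, Finset.card_univ, Fintype.card_fin]
        push_cast; ring
    _ = ∑ k : Fin (p+1), ∑ idx : Fin (p+1) → Fin n,
          A idx * ((∏ j ∈ univ.erase 0, x (idx j)) * v (idx 0)) := by
        refine Finset.sum_congr rfl fun k _ => ?_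
        rw [sum_cons (fun idx => A idx * ((∏ j ∈ univ.erase 0, x (idx j)) * v (idx 0)))]
        refine Finset.sum_congr rfl fun i _ => ?_
        rw [tb, Finset.sum_mul]
        refine Finset.sum_congr rfl fun t _ => ?_
        have hp : (∏ j ∈ univ.erase (0:Fin (p+1)), x (Fin.cons (α := fun _ => Fin n) i t j)) = ∏ k : Fin p, x (t k) := by
          rw [prod_erase_zero]
          simp [Fin.cons_succ]
        rw [hp]
        simp only [Fin.cons_zero]
        ring
    _ = ∑ k : Fin (p+1), ∑ idx : Fin (p+1) → Fin n,
          A idx * ((∏ j ∈ univ.erase k, x (idx j)) * v (idx k)) := by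
        exact Finset.sum_congr rfl fun k _ => (key k).symm
    _ = ∑ idx : Fin (p+1) → Fin n, A idx *
          ∑ k, (∏ j ∈ univ.erase k, x (idx j)) * v (idx k) := by
        rw [Finset.sum_comm]
        exact Finset.sum_congr rfl fun idx _ => by rw [Finset.mul_sum]

noncomputable def tg (x : Fin n → ℝ) : ℝ := ∑ i, x i ^ (p+1)

lemma tg_hasStrictFDerivAt (x : Fin n → ℝ) :
    HasStrictFDerivAt (tg (p := p))
      (∑ i, (((p:ℝ)+1) * x i ^ p) • (ContinuousLinearMap.proj i : (Fin n → ℝ) →L[ℝ] ℝ)) x := by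
  refine HasStrictFDerivAt.fun_sum fun i _ => ?_
  have h := (hasStrictDerivAt_pow (p+1) (x i)).comp_hasStrictFDerivAt x
    (ContinuousLinearMap.proj i : (Fin n → ℝ) →L[ℝ] ℝ).hasStrictFDerivAt
  convert h using 2
  · rfl
  · rfl
  · push_cast; ring


lemma tg_continuous : Continuous (tg (n := n) (p := p)) :=
  continuous_finset_sum _ fun i _ => (continuous_apply i).pow _

lemma exists_eigen_min (hn : 0 < n) (hpe : Even (p+1))
    (A : (Fin (p+1) → Fin n) → ℝ)
    (hsym : ∀ (σ : Equiv.Perm (Fin (p+1))) (idx : Fin (p+1) → Fin n), A (idx ∘ σ) = A idx) :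
    ∃ x₀ : Fin n → ℝ, x₀ ≠ 0 ∧ (∀ i, tb A x₀ i = tf A x₀ * x₀ i ^ p) ∧
      ∀ y : Fin n → ℝ, tg (p := p) y = 1 → tf A x₀ ≤ tf A y := by
  set S : Set (Fin n → ℝ) := {y | tg (p := p) y = 1} with hS
  have hclosed : IsClosed S := isClosed_eq tg_continuous continuous_const
  have hsub : S ⊆ Metric.closedBall 0 1 := by
    intro y hy
    rw [Metric.mem_closedBall, dist_zero_right]
    refine (pi_norm_le_iff_of_nonneg zero_le_one).2 fun i => ?_
    have h1 : ∀ j, 0 ≤ y j ^ (p+1) := fun j => hpe.pow_nonneg _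
    have h2 : y i ^ (p+1) ≤ 1 := by
      have h := Finset.single_le_sum (f := fun j => y j ^ (p+1)) (fun j _ => h1 j)
        (Finset.mem_univ i)
      calc y i ^ (p+1) ≤ ∑ j, y j ^ (p+1) := h
        _ = 1 := hy
    have h3 : |y i| ^ (p+1) ≤ 1 := by rwa [hpe.pow_abs]
    calc ‖y i‖ = |y i| := rfl
      _ ≤ 1 := by
          refine le_of_pow_le_pow_left₀ (Nat.succ_ne_zero p) zero_le_one ?_
          simpa using h3
  have hcompact : IsCompact S :=
    (isCompact_closedBall (0 : Fin n → ℝ) 1).of_isClosed_subset hclosed hsub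
  have hne : S.Nonempty := by
    refine ⟨Pi.single ⟨0, hn⟩ 1, ?_⟩
    show tg _ = 1
    rw [tg]
    rw [Finset.sum_eq_single ⟨0, hn⟩]
    · simp
    · intro j _ hj; rw [Pi.single_apply, if_neg hj, zero_pow (Nat.succ_ne_zero p)]
    · simp
  obtain ⟨x₀, hx₀S, hmin⟩ := hcompact.exists_isMinOn hne (tf_continuous A).continuousOn
  have hx₀ : tg (p := p) x₀ = 1 := hx₀S
  have hextr : IsLocalExtrOn (tf A) {y | tg (p := p) y = tg (p := p) x₀} x₀ := by
    rw [hx₀]; exact Or.inl hmin.localize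
  obtain ⟨a, b, hab, hcomb⟩ := hextr.exists_multipliers_of_hasStrictFDerivAt_1d
    (tg_hasStrictFDerivAt x₀) (tf_hasStrictFDerivAt A hsym x₀)
  have happ : ∀ w : Fin n → ℝ,
      a * ∑ i, ((p:ℝ)+1) * x₀ i ^ p * w i + b * (((p:ℝ)+1) * ∑ i, tb A x₀ i * w i) = 0 := by
    intro w
    have := congrArg (fun L : (Fin n → ℝ) →L[ℝ] ℝ => L w) hcomb
    simpa [Finset.mul_sum, mul_assoc] using this
  have hb : b ≠ 0 := by
    intro hb0
    apply hab
    have h0 := happ x₀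
    rw [hb0] at h0
    have hsum : ∑ i, ((p:ℝ)+1) * x₀ i ^ p * x₀ i = (p:ℝ)+1 := by
      have : ∀ i, ((p:ℝ)+1) * x₀ i ^ p * x₀ i = ((p:ℝ)+1) * x₀ i ^ (p+1) := by
        intro i; rw [pow_succ]; ring
      rw [Finset.sum_congr rfl fun i _ => this i, ← Finset.mul_sum]
      rw [show ∑ i, x₀ i ^ (p+1) = tg (p := p) x₀ from rfl, hx₀, mul_one]
    rw [hsum] at h0
    have ha : a = 0 := by
      have hp1 : ((p:ℝ)+1) ≠ 0 := by positivity
      have h0' : a * ((p:ℝ)+1) = 0 := by linarith [h0]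
      exact (mul_eq_zero.mp h0').resolve_right hp1
    simp [ha, hb0, Prod.ext_iff]
  set lam : ℝ := -a / b with hlam
  have heig : ∀ i, tb A x₀ i = lam * x₀ i ^ p := by
    intro i
    have h0 := happ (Pi.single i 1)
    have hsing : ∀ c : Fin n → ℝ, ∑ j, c j * (Pi.single i 1 : Fin n → ℝ) j = c i := by
      intro c
      rw [Finset.sum_eq_single i]
      · simp
      · intro j _ hj; rw [Pi.single_apply, if_neg hj, mul_zero]
      · simp
    rw [show ∑ j, ((p:ℝ)+1) * x₀ j ^ p * (Pi.single i 1 : Fin n → ℝ) j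
          = ((p:ℝ)+1) * x₀ i ^ p from hsing fun j => ((p:ℝ)+1) * x₀ j ^ p,
        hsing (fun j => tb A x₀ j)] at h0
    have hp1 : ((p:ℝ)+1) ≠ 0 := by positivity
    rw [hlam]
    field_simp
    nlinarith [h0]
  have hlameq : tf A x₀ = lam := by
    rw [tf_eq_sum_tb]
    have : ∀ i, x₀ i * tb A x₀ i = lam * x₀ i ^ (p+1) := by
      intro i; rw [heig i, pow_succ]; ring
    rw [Finset.sum_congr rfl fun i _ => this i, ← Finset.mul_sum,
      show ∑ i, x₀ i ^ (p+1) = tg (p := p) x₀ from rfl, hx₀, mul_one]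
  refine ⟨x₀, ?_, by rw [hlameq]; exact heig, fun y hy => hmin hy⟩
  intro h0
  rw [h0] at hx₀
  simp [tg, zero_pow (Nat.succ_ne_zero p)] at hx₀

lemma consIdx_eq_cons {n p : ℕ} (i : Fin n) (idx : Fin p → Fin n) :
    consIdx (m := p+1) i idx = Fin.cons i idx := by
  funext k
  refine Fin.cases ?_ ?_ k
  · simp [consIdx]
  · intro j
    simp [consIdx, Fin.cons_succ]

end PSDAux

theorem psd_iff_H_eigenvalues_nonneg (n m : ℕ) (hm0 : 0 < m) (hme : Even m)
    (A : (Fin m → Fin n) → ℝ)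
    (hsym : ∀ (σ : Equiv.Perm (Fin m)) (idx : Fin m → Fin n), A (idx ∘ σ) = A idx) :
    (∀ x : Fin n → ℝ, 0 ≤ ∑ idx : Fin m → Fin n, A idx * ∏ k, x (idx k)) ↔
      ∀ lam : ℝ,
        (∃ x : Fin n → ℝ, x ≠ 0 ∧ ∀ i : Fin n,
            (∑ idx : Fin (m - 1) → Fin n, A (consIdx i idx) * ∏ k, x (idx k)) =
              lam * x i ^ (m - 1)) →
        0 ≤ lam := by
  obtain ⟨p, rfl⟩ : ∃ p, m = p + 1 := ⟨m - 1, (Nat.succ_pred_eq_of_pos hm0).symm⟩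
  have key : ∀ (x : Fin n → ℝ) (i : Fin n),
      (∑ idx : Fin (p + 1 - 1) → Fin n, A (consIdx i idx) * ∏ k, x (idx k))
        = PSDAux.tb A x i := by
    intro x i
    show (∑ idx : Fin p → Fin n, A (consIdx (m := p+1) i idx) * ∏ k, x (idx k)) = _
    rw [PSDAux.tb]
    exact Finset.sum_congr rfl fun idx _ => by rw [PSDAux.consIdx_eq_cons]
  constructor
  · rintro hpsd lam ⟨x, hx0, heig⟩
    have heig' : ∀ i, PSDAux.tb A x i = lam * x i ^ p := by
      intro i
      rw [← key x i]
      exact heig i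
    have hsum : PSDAux.tf A x = lam * ∑ i, x i ^ (p+1) := by
      rw [PSDAux.tf_eq_sum_tb, Finset.mul_sum]
      refine Finset.sum_congr rfl fun i _ => ?_
      rw [heig' i, pow_succ]
      ring
    have hpos : 0 < ∑ i, x i ^ (p+1) := by
      obtain ⟨i, hi⟩ := Function.ne_iff.mp hx0
      refine Finset.sum_pos' (fun j _ => hme.pow_nonneg _)
        ⟨i, Finset.mem_univ i, hme.pow_pos hi⟩
    have h0 : 0 ≤ lam * ∑ i, x i ^ (p+1) := by
      rw [← hsum]
      exact hpsd x
    exact (mul_nonneg_iff_of_pos_right hpos).mp h0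
  · intro hev x
    rcases Nat.eq_zero_or_pos n with hn | hn
    · subst hn
      haveI : IsEmpty (Fin (p+1) → Fin 0) := ⟨fun f => (f 0).elim0⟩
      rw [Finset.univ_eq_empty, Finset.sum_empty]
    · obtain ⟨x₀, hx₀ne, heig, hmin⟩ := PSDAux.exists_eigen_min hn hme A hsym
      have hlam : 0 ≤ PSDAux.tf A x₀ := by
        refine hev (PSDAux.tf A x₀) ⟨x₀, hx₀ne, fun i => ?_⟩
        rw [key x₀ i]
        exact heig i
      show 0 ≤ PSDAux.tf A x
      by_cases hx : x = 0
      · subst hx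
        simp [PSDAux.tf, zero_pow (Nat.succ_ne_zero p)]
      · have ht : 0 < PSDAux.tg (p := p) x := by
          obtain ⟨i, hi⟩ := Function.ne_iff.mp hx
          refine Finset.sum_pos' (fun j _ => hme.pow_nonneg _)
            ⟨i, Finset.mem_univ i, hme.pow_pos hi⟩
        set t := PSDAux.tg (p := p) x with htdef
        set c : ℝ := t ^ (1 / ((p:ℝ)+1)) with hc
        have hc0 : 0 < c := Real.rpow_pos_of_pos ht _
        have hcp : c ^ (p+1) = t := by
          rw [hc, ← Real.rpow_natCast (t ^ (1 / ((p:ℝ)+1))) (p+1), ← Real.rpow_mul ht.le]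
          push_cast
          rw [one_div, inv_mul_cancel₀ (by positivity), Real.rpow_one]
        have hy : PSDAux.tg (p := p) (c⁻¹ • x) = 1 := by
          rw [PSDAux.tg]
          have : ∀ i, (c⁻¹ • x) i ^ (p+1) = (c ^ (p+1))⁻¹ * x i ^ (p+1) := by
            intro i
            simp [mul_pow, inv_pow]
          rw [Finset.sum_congr rfl fun i _ => this i, ← Finset.mul_sum, hcp]
          rw [show ∑ i, x i ^ (p+1) = t from rfl]
          exact inv_mul_cancel₀ ht.ne'
        have hle := hmin _ hy
        have hxeq : c • (c⁻¹ • x) = x := smul_inv_smul₀ hc0.ne' x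
        calc (0:ℝ) ≤ c ^ (p+1) * PSDAux.tf A (c⁻¹ • x) :=
              mul_nonneg (pow_nonneg hc0.le _) (le_trans hlam hle)
          _ = PSDAux.tf A (c • (c⁻¹ • x)) := (PSDAux.tf_smul A c _).symm
          _ = PSDAux.tf A x := by rw [hxeq]
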